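/- arXiv:2211.16226 — 2 statements merged into one kernel-verified Lean document; each statement's English description precedes it below -/
import Mathlib

section
/- Let A be an integral domain of characteristic p > 0 that is p-closed, i.e., for every element a of the fraction field of A with a^p ∈ A, one has a ∈ A. If the perfect closure of A (the ring of all elements x in an algebraic closure of Frac(A) such that x^{p^n} ∈ A for some n ≥ 0) is integrally closed in its fraction field, then A is integrally closed in Frac(A). -/
set_option maxHeartbeats 1000000 in
/-- A p-closed domain whose perfect closure (inside an algebraic closure of its
fraction field) is integrally closed in its fraction field is itself integrally
closed in its fraction field. -/
theorem stmt_0 (p : ℕ) (hp : p.Prime) (A : Type*) [CommRing A] [IsDomain A] [CharP A p]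
    (pclosed : ∀ a : FractionRing A,
      a ^ p ∈ (algebraMap A (FractionRing A)).range → a ∈ (algebraMap A (FractionRing A)).range)
    (Aperf : Subring (AlgebraicClosure (FractionRing A)))
    (hAperf : ∀ x : AlgebraicClosure (FractionRing A), x ∈ Aperf ↔ ∃ n : ℕ,
      x ^ p ^ n ∈ (algebraMap A (AlgebraicClosure (FractionRing A))).range)
    (hnormal : ∀ x : AlgebraicClosure (FractionRing A),
      (∃ a ∈ Aperf, ∃ b ∈ Aperf, b ≠ 0 ∧ x * b = a) →
      (∃ f : Polynomial (AlgebraicClosure (FractionRing A)), f.Monic ∧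
        (∀ n, f.coeff n ∈ Aperf) ∧ f.eval x = 0) → x ∈ Aperf) :
    ∀ a : FractionRing A, IsIntegral A a → a ∈ (algebraMap A (FractionRing A)).range := by
  intro a hint
  let K := FractionRing A
  let L := AlgebraicClosure (FractionRing A)
  let x : L := algebraMap K L a
  have hArange : ∀ c : A, algebraMap A L c ∈ Aperf := by
    intro c
    rw [hAperf]
    exact ⟨0, by rw [pow_zero, pow_one]; exact ⟨c, rfl⟩⟩
  have hfrac : ∃ α ∈ Aperf, ∃ b ∈ Aperf, b ≠ 0 ∧ x * b = α := by
    obtain ⟨⟨r, s⟩, hs⟩ := IsLocalization.surj (nonZeroDivisors A) a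
    refine ⟨algebraMap A L r, hArange r, algebraMap A L s, hArange s, ?_, ?_⟩
    · have hs0 : (s : A) ≠ 0 := nonZeroDivisors.coe_ne_zero s
      simp only [ne_eq, IsScalarTower.algebraMap_apply A K L]
      intro h
      exact hs0 (IsFractionRing.to_map_eq_zero_iff.mp
        ((RingHom.injective (algebraMap K L)) (by simpa using h)))
    · have := congrArg (algebraMap K L) hs
      simpa [x, IsScalarTower.algebraMap_apply A K L, map_mul] using this
  obtain ⟨f, hf, heval⟩ := hint
  have hintL : ∃ g : Polynomial L, g.Monic ∧ (∀ n, g.coeff n ∈ Aperf) ∧ g.eval x = 0 := by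
    refine ⟨f.map (algebraMap A L), hf.map _, ?_, ?_⟩
    · intro n
      rw [Polynomial.coeff_map]
      exact hArange _
    · have h1 : Polynomial.aeval a f = 0 := by rw [Polynomial.aeval_def]; exact heval
      have h2 : Polynomial.aeval x f = 0 := by
        show Polynomial.aeval (algebraMap K L a) f = 0
        rw [Polynomial.aeval_algebraMap_apply, h1, map_zero]
      rwa [Polynomial.aeval_def, ← Polynomial.eval_map] at h2
  have hxperf : x ∈ Aperf := hnormal x hfrac hintL
  obtain ⟨n, c, hc⟩ := (hAperf x).mp hxperf
  have hKn : a ^ p ^ n ∈ (algebraMap A K).range := by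
    refine ⟨c, ?_⟩
    apply RingHom.injective (algebraMap K L)
    rw [map_pow, ← IsScalarTower.algebraMap_apply A K L]
    exact hc
  clear hc
  induction n with
  | zero => simpa using hKn
  | succ n ih =>
    apply ih
    apply pclosed
    rw [← pow_mul, ← pow_succ]
    exact hKn
end

section
/- Let G be a group and K a subgroup such that every double coset KgK is a finite union of left cosets of K. Let H be the set of functions f : G → R (R a commutative ring) that are left and right K-invariant and supported on finitely many double cosets. Then the convolution (f₁ * f₂)(g) = Σ_{hK ∈ G/K} f₁(h) f₂(h⁻¹ g) is a well-defined (finite) sum independent of the choice of coset representatives, H is closed under convolution, convolution is associative and R-bilinear, and the characteristic function of K is a two-sided identity. Hence H is an associative unital R-algebra. -/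
/-- `f` is K-bi-invariant and supported on finitely many double cosets. -/
def IsHeckeFunction {G R : Type*} [Group G] [CommRing R] (K : Subgroup G) (f : G → R) : Prop :=
  (∀ g : G, ∀ k₁ ∈ K, ∀ k₂ ∈ K, f (k₁ * g * k₂) = f g) ∧
  ∃ S : Finset G, ∀ g : G, f g ≠ 0 → ∃ s ∈ S, ∃ k₁ ∈ K, ∃ k₂ ∈ K, g = k₁ * s * k₂

namespace HeckeAux

variable {G : Type*} [Group G] {R : Type*} [CommRing R] (K : Subgroup G)

noncomputable def conv (f₁ f₂ : G → R) (g : G) : R :=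
  ∑ᶠ x : G ⧸ K, f₁ x.out * f₂ (x.out⁻¹ * g)

variable {K}

theorem rightInv {f : G → R} (hf : IsHeckeFunction K f) (g : G) {k : G} (hk : k ∈ K) :
    f (g * k) = f g := by
  have := hf.1 g 1 K.one_mem k hk; simpa using this

theorem leftInv {f : G → R} (hf : IsHeckeFunction K f) (g : G) {k : G} (hk : k ∈ K) :
    f (k * g) = f g := by
  have := hf.1 g k hk 1 K.one_mem; simpa using this

theorem summand_eq {f₁ f₂ : G → R} (h₁ : IsHeckeFunction K f₁) (h₂ : IsHeckeFunction K f₂)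
    (g : G) {h h' : G} (hm : (QuotientGroup.mk h : G ⧸ K) = QuotientGroup.mk h') :
    f₁ h * f₂ (h⁻¹ * g) = f₁ h' * f₂ (h'⁻¹ * g) := by
  have hk : h⁻¹ * h' ∈ K := QuotientGroup.eq.mp hm
  have hh' : h' = h * (h⁻¹ * h') := by group
  have e2 : (h * (h⁻¹ * h'))⁻¹ * g = (h⁻¹ * h')⁻¹ * (h⁻¹ * g) := by group
  rw [hh', rightInv h₁ _ hk, e2, leftInv h₂ _ (K.inv_mem hk)]

theorem summand_out {f₁ f₂ : G → R} (h₁ : IsHeckeFunction K f₁) (h₂ : IsHeckeFunction K f₂)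
    (g : G) (h : G) :
    f₁ (QuotientGroup.mk h : G ⧸ K).out * f₂ ((QuotientGroup.mk h : G ⧸ K).out⁻¹ * g)
      = f₁ h * f₂ (h⁻¹ * g) :=
  summand_eq h₁ h₂ g (QuotientGroup.out_eq' _)


def Hfin (K : Subgroup G) : Prop := ∀ g : G,
  {x : G ⧸ K | ∃ k₁ ∈ K, ∃ k₂ ∈ K, x = QuotientGroup.mk (k₁ * g * k₂)}.Finite

/-- finiteness of `{x | f (w * x.out) ≠ 0}`. -/
theorem suppA (hfin : Hfin K) {f : G → R} (hf : IsHeckeFunction K f) (w : G) :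
    {x : G ⧸ K | f (w * x.out) ≠ 0}.Finite := by
  obtain ⟨S, hS⟩ := hf.2
  refine Set.Finite.subset (Set.Finite.biUnion S.finite_toSet
    (fun s _ => (hfin s).image (fun q => w⁻¹ • q))) ?_
  intro x hx
  obtain ⟨s, hs, k₁, hk₁, k₂, hk₂, he⟩ := hS _ hx
  refine Set.mem_biUnion hs ⟨QuotientGroup.mk (k₁ * s * k₂), ⟨k₁, hk₁, k₂, hk₂, rfl⟩, ?_⟩
  rw [← he]
  show w⁻¹ • (QuotientGroup.mk (w * x.out) : G ⧸ K) = x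
  rw [MulAction.Quotient.smul_mk, smul_eq_mul]
  have : w⁻¹ * (w * x.out) = x.out := by group
  rw [this, QuotientGroup.out_eq']

theorem suppA1 (hfin : Hfin K) {f : G → R} (hf : IsHeckeFunction K f) :
    {x : G ⧸ K | f x.out ≠ 0}.Finite := by
  have := suppA hfin hf 1
  simpa using this

/-- finiteness of `{x | f (x.out⁻¹ * g) ≠ 0}`. -/
theorem suppC (hfin : Hfin K) {f : G → R} (hf : IsHeckeFunction K f) (g : G) :
    {x : G ⧸ K | f (x.out⁻¹ * g) ≠ 0}.Finite := by
  obtain ⟨S, hS⟩ := hf.2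
  refine Set.Finite.subset (Set.Finite.biUnion S.finite_toSet
    (fun s _ => (hfin s⁻¹).image (fun q => g • q))) ?_
  intro x hx
  obtain ⟨s, hs, k₁, hk₁, k₂, hk₂, he⟩ := hS _ hx
  refine Set.mem_biUnion hs
    ⟨QuotientGroup.mk (k₂⁻¹ * s⁻¹ * k₁⁻¹), ⟨k₂⁻¹, K.inv_mem hk₂, k₁⁻¹, K.inv_mem hk₁, rfl⟩, ?_⟩
  show g • (QuotientGroup.mk (k₂⁻¹ * s⁻¹ * k₁⁻¹) : G ⧸ K) = x
  rw [MulAction.Quotient.smul_mk, smul_eq_mul]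
  have hx' : x.out = g * (k₂⁻¹ * s⁻¹ * k₁⁻¹) := by
    have h2 : x.out⁻¹ = k₁ * s * k₂ * g⁻¹ := by rw [← he]; group
    calc x.out = (x.out⁻¹)⁻¹ := by group
    _ = g * (k₂⁻¹ * s⁻¹ * k₁⁻¹) := by rw [h2]; group
  rw [← hx', QuotientGroup.out_eq']

/-- support of the convolution summand is finite. -/
theorem supp_summand (hfin : Hfin K) {f₁ : G → R} (h₁ : IsHeckeFunction K f₁) (f₂ : G → R) (g : G) :
    (Function.support fun x : G ⧸ K => f₁ x.out * f₂ (x.out⁻¹ * g)).Finite := by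
  refine (suppA1 hfin h₁).subset ?_
  intro x hx
  simp only [Function.mem_support] at hx
  exact fun h0 => hx (by rw [h0, zero_mul])


theorem smul_eq_mk (k : G) (x : G ⧸ K) : k • x = QuotientGroup.mk (k * x.out) := by
  conv_lhs => rw [← QuotientGroup.out_eq' x]
  rw [MulAction.Quotient.smul_mk]
  rfl

theorem key_inv {f₁ f₂ : G → R} (h₁ : IsHeckeFunction K f₁) (h₂ : IsHeckeFunction K f₂)
    (g : G) {k₁ k₂ : G} (hk₁ : k₁ ∈ K) (hk₂ : k₂ ∈ K) (x : G ⧸ K) :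
    f₁ x.out * f₂ (x.out⁻¹ * (k₁ * g * k₂))
      = f₁ (k₁⁻¹ • x).out * f₂ ((k₁⁻¹ • x).out⁻¹ * g) := by
  rw [smul_eq_mk, summand_out h₁ h₂ g, leftInv h₁ _ (K.inv_mem hk₁)]
  have e1 : x.out⁻¹ * (k₁ * g * k₂) = ((k₁⁻¹ * x.out)⁻¹ * g) * k₂ := by group
  rw [e1, rightInv h₂ _ hk₂]

theorem conv_inv {f₁ f₂ : G → R} (h₁ : IsHeckeFunction K f₁) (h₂ : IsHeckeFunction K f₂)
    (g : G) {k₁ k₂ : G} (hk₁ : k₁ ∈ K) (hk₂ : k₂ ∈ K) :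
    conv K f₁ f₂ (k₁ * g * k₂) = conv K f₁ f₂ g := by
  unfold conv
  calc ∑ᶠ x : G ⧸ K, f₁ x.out * f₂ (x.out⁻¹ * (k₁ * g * k₂))
      = ∑ᶠ x : G ⧸ K, (fun y : G ⧸ K => f₁ y.out * f₂ (y.out⁻¹ * g))
          ((MulAction.toPerm k₁⁻¹ : Equiv.Perm (G ⧸ K)) x) := by
        refine finsum_congr fun x => ?_
        exact key_inv h₁ h₂ g hk₁ hk₂ x
    _ = ∑ᶠ y : G ⧸ K, f₁ y.out * f₂ (y.out⁻¹ * g) :=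
        finsum_comp_equiv (M := R) (MulAction.toPerm k₁⁻¹ : Equiv.Perm (G ⧸ K))
          (f := fun y : G ⧸ K => f₁ y.out * f₂ (y.out⁻¹ * g))

theorem conv_finsupp (hfin : Hfin K) {f₁ f₂ : G → R}
    (h₁ : IsHeckeFunction K f₁) (h₂ : IsHeckeFunction K f₂) :
    ∃ S : Finset G, ∀ g : G, conv K f₁ f₂ g ≠ 0 →
      ∃ s ∈ S, ∃ k₁ ∈ K, ∃ k₂ ∈ K, g = k₁ * s * k₂ := by
  obtain ⟨S₁, hS₁⟩ := h₁.2
  obtain ⟨S₂, hS₂⟩ := h₂.2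
  classical
  refine ⟨S₁.biUnion fun s₁ => S₂.biUnion fun s₂ =>
    ((hfin s₁).toFinset.image Quotient.out).biUnion fun c =>
      ((hfin s₂).toFinset.image Quotient.out).image fun d => c * d, ?_⟩
  intro g hg
  have : ∃ x : G ⧸ K, f₁ x.out * f₂ (x.out⁻¹ * g) ≠ 0 := by
    by_contra hc
    push_neg at hc
    exact hg (finsum_eq_zero_of_forall_eq_zero hc)
  obtain ⟨x, hx⟩ := this
  set a := x.out with ha
  have hf₁ : f₁ a ≠ 0 := fun h0 => hx (by rw [h0, zero_mul])
  have hf₂ : f₂ (a⁻¹ * g) ≠ 0 := fun h0 => hx (by rw [h0, mul_zero])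
  obtain ⟨s₁, hs₁, k₁, hk₁, k₁', hk₁', hea⟩ := hS₁ _ hf₁
  obtain ⟨s₂, hs₂, k₂, hk₂, k₂', hk₂', heb⟩ := hS₂ _ hf₂
  -- u = s₁ * (k₁' * k₂), element of K s₁ K
  set u : G := s₁ * (k₁' * k₂) with hu
  have hmu : (QuotientGroup.mk u : G ⧸ K) ∈
      {x : G ⧸ K | ∃ k₁ ∈ K, ∃ k₂ ∈ K, x = QuotientGroup.mk (k₁ * s₁ * k₂)} :=
    ⟨1, K.one_mem, k₁' * k₂, K.mul_mem hk₁' hk₂, by rw [one_mul, hu]⟩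
  set c : G := (QuotientGroup.mk u : G ⧸ K).out with hc
  have hcu : c⁻¹ * u ∈ K := by
    rw [hc]
    exact QuotientGroup.eq.mp (QuotientGroup.out_eq' _)
  set v : G := (c⁻¹ * u) * s₂ * k₂' with hv
  have hmv : (QuotientGroup.mk v : G ⧸ K) ∈
      {x : G ⧸ K | ∃ k₁ ∈ K, ∃ k₂ ∈ K, x = QuotientGroup.mk (k₁ * s₂ * k₂)} := by
    refine ⟨c⁻¹ * u, hcu, k₂', hk₂', ?_⟩
    rw [hv]
  set d : G := (QuotientGroup.mk v : G ⧸ K).out with hd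
  have hdv : d⁻¹ * v ∈ K := by
    rw [hd]
    exact QuotientGroup.eq.mp (QuotientGroup.out_eq' _)
  refine ⟨c * d, ?_, k₁, hk₁, d⁻¹ * v, hdv, ?_⟩
  · refine Finset.mem_biUnion.mpr ⟨s₁, hs₁, Finset.mem_biUnion.mpr ⟨s₂, hs₂, ?_⟩⟩
    refine Finset.mem_biUnion.mpr ⟨c, Finset.mem_image.mpr
      ⟨(QuotientGroup.mk u : G ⧸ K), (Set.Finite.mem_toFinset _).mpr hmu, hc.symm⟩, ?_⟩
    exact Finset.mem_image.mpr ⟨d, Finset.mem_image.mpr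
      ⟨(QuotientGroup.mk v : G ⧸ K), (Set.Finite.mem_toFinset _).mpr hmv, hd.symm⟩, rfl⟩
  · have hg' : g = a * (a⁻¹ * g) := by group
    have hcu' : c * (c⁻¹ * u) = u := by group
    calc g = a * (a⁻¹ * g) := hg'
    _ = (k₁ * s₁ * k₁') * (k₂ * s₂ * k₂') := by rw [← hea, ← heb]
    _ = k₁ * (u * (s₂ * k₂')) := by rw [hu]; group
    _ = k₁ * ((c * (c⁻¹ * u)) * (s₂ * k₂')) := by rw [hcu']
    _ = k₁ * (c * v) := by rw [hv]; group
    _ = k₁ * (c * d) * (d⁻¹ * v) := by group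


/-- identity element: indicator of K. -/
theorem indicator_hecke : IsHeckeFunction K ((K : Set G).indicator (1 : G → R)) := by
  constructor
  · intro g k₁ hk₁ k₂ hk₂
    by_cases hg : g ∈ K
    · rw [Set.indicator_of_mem (K.mul_mem (K.mul_mem hk₁ hg) hk₂), Set.indicator_of_mem hg]
      simp only [Pi.one_apply]
    · rw [Set.indicator_of_notMem, Set.indicator_of_notMem hg]
      intro hmem
      have hgK : g = k₁⁻¹ * (k₁ * g * k₂) * k₂⁻¹ := by group
      exact hg (hgK ▸ K.mul_mem (K.mul_mem (K.inv_mem hk₁) hmem) (K.inv_mem hk₂))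
  · refine ⟨{1}, fun g hg => ?_⟩
    have hgK : g ∈ K := by
      by_contra hc
      exact hg (Set.indicator_of_notMem hc _)
    exact ⟨1, Finset.mem_singleton_self 1, g, hgK, 1, K.one_mem, by group⟩

theorem conv_one_left {f : G → R} (hf : IsHeckeFunction K f) :
    conv K ((K : Set G).indicator (1 : G → R)) f = f := by
  funext g
  unfold conv
  have h0 : ∀ x : G ⧸ K, x ≠ (QuotientGroup.mk (1 : G) : G ⧸ K) →
      (K : Set G).indicator (1 : G → R) x.out * f (x.out⁻¹ * g) = 0 := by
    intro x hx
    have : x.out ∉ (K : Set G) := by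
      intro hmem
      refine hx ?_
      rw [← QuotientGroup.out_eq' x]
      exact QuotientGroup.eq.mpr (by simpa using K.inv_mem hmem)
    rw [Set.indicator_of_notMem this, zero_mul]
  rw [finsum_eq_single _ (QuotientGroup.mk (1 : G) : G ⧸ K) h0]
  have hout : (QuotientGroup.mk (1 : G) : G ⧸ K).out ∈ K := by
    have h := QuotientGroup.eq.mp (QuotientGroup.out_eq' (QuotientGroup.mk (1 : G) : G ⧸ K))
    rw [mul_one] at h
    simpa using K.inv_mem h
  rw [Set.indicator_of_mem hout, Pi.one_apply, one_mul]
  exact leftInv hf g (K.inv_mem hout)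

theorem conv_one_right {f : G → R} (hf : IsHeckeFunction K f) :
    conv K f ((K : Set G).indicator (1 : G → R)) = f := by
  funext g
  unfold conv
  have h0 : ∀ x : G ⧸ K, x ≠ QuotientGroup.mk g →
      f x.out * (K : Set G).indicator (1 : G → R) (x.out⁻¹ * g) = 0 := by
    intro x hx
    have : x.out⁻¹ * g ∉ (K : Set G) := by
      intro hmem
      exact hx (by rw [← QuotientGroup.out_eq' x]; exact QuotientGroup.eq.mpr hmem)
    rw [Set.indicator_of_notMem this, mul_zero]
  rw [finsum_eq_single _ (QuotientGroup.mk g : G ⧸ K) h0]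
  have hmem : (QuotientGroup.mk g : G ⧸ K).out⁻¹ * g ∈ K := by
    have := QuotientGroup.out_eq' (QuotientGroup.mk g : G ⧸ K)
    exact QuotientGroup.eq.mp this
  rw [Set.indicator_of_mem hmem, Pi.one_apply, mul_one]
  have hk : g⁻¹ * (QuotientGroup.mk g : G ⧸ K).out ∈ K :=
    QuotientGroup.eq.mp (QuotientGroup.out_eq' (QuotientGroup.mk g : G ⧸ K)).symm
  have he : (QuotientGroup.mk g : G ⧸ K).out = g * (g⁻¹ * (QuotientGroup.mk g : G ⧸ K).out) := by
    group
  rw [he, rightInv hf g hk]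

/-- generic support lemma on the right factor. -/
theorem supp_summandC (hfin : Hfin K) (A : G ⧸ K → R) {f₃ : G → R}
    (h₃ : IsHeckeFunction K f₃) (g : G) :
    (Function.support fun x : G ⧸ K => A x * f₃ (x.out⁻¹ * g)).Finite := by
  refine (suppC hfin h₃ g).subset fun x hx => ?_
  simp only [Function.mem_support] at hx
  exact fun h0 => hx (by rw [h0, mul_zero])

theorem conv_smul_left (hfin : Hfin K) (r : R) {f₁ : G → R} (h₁ : IsHeckeFunction K f₁)
    (f₂ : G → R) : conv K (r • f₁) f₂ = r • conv K f₁ f₂ := by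
  funext g
  show (∑ᶠ x : G ⧸ K, (r • f₁) x.out * f₂ (x.out⁻¹ * g)) = r * conv K f₁ f₂ g
  unfold conv
  rw [mul_finsum' _ r (supp_summand hfin h₁ f₂ g)]
  refine finsum_congr fun x => ?_
  simp only [Pi.smul_apply, smul_eq_mul, mul_assoc]

theorem conv_smul_right (hfin : Hfin K) (r : R) {f₁ : G → R} (h₁ : IsHeckeFunction K f₁)
    (f₂ : G → R) : conv K f₁ (r • f₂) = r • conv K f₁ f₂ := by
  funext g
  show (∑ᶠ x : G ⧸ K, f₁ x.out * (r • f₂) (x.out⁻¹ * g)) = r * conv K f₁ f₂ g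
  unfold conv
  rw [mul_finsum' _ r (supp_summand hfin h₁ f₂ g)]
  refine finsum_congr fun x => ?_
  simp only [Pi.smul_apply, smul_eq_mul]
  ring

theorem conv_add_left (hfin : Hfin K) {f₁ f₂ : G → R} (h₁ : IsHeckeFunction K f₁)
    (h₂ : IsHeckeFunction K f₂) (f₃ : G → R) :
    conv K (f₁ + f₂) f₃ = conv K f₁ f₃ + conv K f₂ f₃ := by
  funext g
  show (∑ᶠ x : G ⧸ K, (f₁ + f₂) x.out * f₃ (x.out⁻¹ * g)) = conv K f₁ f₃ g + conv K f₂ f₃ g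
  unfold conv
  rw [← finsum_add_distrib (supp_summand hfin h₁ f₃ g) (supp_summand hfin h₂ f₃ g)]
  refine finsum_congr fun x => ?_
  simp only [Pi.add_apply]
  ring

theorem conv_add_right (hfin : Hfin K) {f₁ : G → R} (h₁ : IsHeckeFunction K f₁)
    (f₂ f₃ : G → R) :
    conv K f₁ (f₂ + f₃) = conv K f₁ f₂ + conv K f₁ f₃ := by
  funext g
  show (∑ᶠ x : G ⧸ K, f₁ x.out * (f₂ + f₃) (x.out⁻¹ * g)) = conv K f₁ f₂ g + conv K f₁ f₃ g
  unfold conv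
  rw [← finsum_add_distrib (supp_summand hfin h₁ f₂ g) (supp_summand hfin h₁ f₃ g)]
  refine finsum_congr fun x => ?_
  simp only [Pi.add_apply]
  ring

theorem finsum_swap {α β : Type*} (f : α → β → R)
    (h : (Function.support fun p : α × β => f p.1 p.2).Finite) :
    ∑ᶠ a, ∑ᶠ b, f a b = ∑ᶠ b, ∑ᶠ a, f a b := by
  have h' : (Function.support fun p : β × α => f p.2 p.1).Finite := by
    have heq : (Function.support fun p : β × α => f p.2 p.1) =
        (fun p : β × α => (p.2, p.1)) ⁻¹' (Function.support fun p : α × β => f p.1 p.2) := rfl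
    rw [heq]
    exact Set.Finite.preimage (Set.injOn_of_injective
      (fun p q hpq => by
        have h1 : p.2 = q.2 := congrArg Prod.fst hpq
        have h2 : p.1 = q.1 := congrArg Prod.snd hpq
        exact Prod.ext h2 h1)) h
  rw [← finsum_curry _ h, ← finsum_curry (fun p : β × α => f p.2 p.1) h']
  exact ((finsum_comp_equiv (M := R) (Equiv.prodComm β α)
    (f := fun p : α × β => f p.1 p.2)).symm.trans (finsum_congr fun p => rfl))

theorem inner_reindex {f₂ f₃ : G → R} (h₂ : IsHeckeFunction K f₂) (h₃ : IsHeckeFunction K f₃)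
    (w g' : G) :
    ∑ᶠ x : G ⧸ K, f₂ x.out * f₃ (x.out⁻¹ * (w * g'))
      = ∑ᶠ x : G ⧸ K, f₂ (w * x.out) * f₃ (x.out⁻¹ * g') := by
  calc ∑ᶠ x : G ⧸ K, f₂ x.out * f₃ (x.out⁻¹ * (w * g'))
      = ∑ᶠ x : G ⧸ K, (fun z : G ⧸ K => f₂ z.out * f₃ (z.out⁻¹ * (w * g')))
          ((MulAction.toPerm w : Equiv.Perm (G ⧸ K)) x) :=
        (finsum_comp_equiv (M := R) (MulAction.toPerm w : Equiv.Perm (G ⧸ K))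
          (f := fun z : G ⧸ K => f₂ z.out * f₃ (z.out⁻¹ * (w * g')))).symm
    _ = ∑ᶠ x : G ⧸ K, f₂ (w * x.out) * f₃ (x.out⁻¹ * g') := by
        refine finsum_congr fun x => ?_
        show f₂ (w • x).out * f₃ ((w • x).out⁻¹ * (w * g')) = _
        rw [smul_eq_mk, summand_out h₂ h₃]
        have e : (w * x.out)⁻¹ * (w * g') = x.out⁻¹ * g' := by group
        rw [e]

theorem conv_assoc (hfin : Hfin K) {f₁ f₂ f₃ : G → R} (h₁ : IsHeckeFunction K f₁)
    (h₂ : IsHeckeFunction K f₂) (h₃ : IsHeckeFunction K f₃) :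
    conv K (conv K f₁ f₂) f₃ = conv K f₁ (conv K f₂ f₃) := by
  funext g
  unfold conv
  have hpair : (Function.support fun p : (G ⧸ K) × (G ⧸ K) =>
      (f₁ p.2.out * f₂ (p.2.out⁻¹ * p.1.out)) * f₃ (p.1.out⁻¹ * g)).Finite := by
    refine Set.Finite.subset (Set.Finite.prod (suppC hfin h₃ g) (suppA1 hfin h₁)) ?_
    intro p hp
    simp only [Function.mem_support] at hp
    refine ⟨?_, ?_⟩
    · exact fun h0 => hp (by rw [h0, mul_zero])
    · exact fun h0 => hp (by rw [h0, zero_mul, zero_mul])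
  calc ∑ᶠ x : G ⧸ K, (∑ᶠ y : G ⧸ K, f₁ y.out * f₂ (y.out⁻¹ * x.out)) * f₃ (x.out⁻¹ * g)
      = ∑ᶠ x : G ⧸ K, ∑ᶠ y : G ⧸ K, (f₁ y.out * f₂ (y.out⁻¹ * x.out)) * f₃ (x.out⁻¹ * g) :=
        finsum_congr fun x => finsum_mul' _ _ (supp_summand hfin h₁ f₂ x.out)
    _ = ∑ᶠ y : G ⧸ K, ∑ᶠ x : G ⧸ K, (f₁ y.out * f₂ (y.out⁻¹ * x.out)) * f₃ (x.out⁻¹ * g) :=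
        finsum_swap (fun (x : G ⧸ K) (y : G ⧸ K) => (f₁ y.out * f₂ (y.out⁻¹ * x.out)) * f₃ (x.out⁻¹ * g)) hpair
    _ = ∑ᶠ y : G ⧸ K, f₁ y.out * ∑ᶠ x : G ⧸ K, f₂ (y.out⁻¹ * x.out) * f₃ (x.out⁻¹ * g) := by
        refine finsum_congr fun y => ?_
        rw [mul_finsum' _ _ (supp_summandC hfin (fun x : G ⧸ K => f₂ (y.out⁻¹ * x.out)) h₃ g)]
        refine finsum_congr fun x => ?_
        rw [mul_assoc]
    _ = ∑ᶠ y : G ⧸ K, f₁ y.out * ∑ᶠ x : G ⧸ K, f₂ x.out * f₃ (x.out⁻¹ * (y.out⁻¹ * g)) := by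
        refine finsum_congr fun y => ?_
        rw [inner_reindex h₂ h₃ y.out⁻¹ g]

end HeckeAux

/-- The mod p (or any coefficient ring) Hecke algebra: convolution is a
well-defined finite sum, H is closed under it, it is associative, R-bilinear,
and the characteristic function of K is a two-sided identity. -/
theorem stmt_3 {G : Type*} [Group G] (K : Subgroup G) (R : Type*) [CommRing R]
    (hfin : ∀ g : G,
      {x : G ⧸ K | ∃ k₁ ∈ K, ∃ k₂ ∈ K, x = QuotientGroup.mk (k₁ * g * k₂)}.Finite) :
    ∃ conv : (G → R) → (G → R) → (G → R),
      (∀ f₁ f₂ : G → R, IsHeckeFunction K f₁ → IsHeckeFunction K f₂ → ∀ g : G,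
        ∀ F : G ⧸ K → R, (∀ h : G, F (QuotientGroup.mk h) = f₁ h * f₂ (h⁻¹ * g)) →
          (Function.support F).Finite ∧ conv f₁ f₂ g = ∑ᶠ x, F x) ∧
      (∀ f₁ f₂, IsHeckeFunction K f₁ → IsHeckeFunction K f₂ →
        IsHeckeFunction K (conv f₁ f₂)) ∧
      (∀ f₁ f₂ f₃, IsHeckeFunction K f₁ → IsHeckeFunction K f₂ → IsHeckeFunction K f₃ →
        conv (conv f₁ f₂) f₃ = conv f₁ (conv f₂ f₃)) ∧
      (∀ (r : R) f₁ f₂, IsHeckeFunction K f₁ → IsHeckeFunction K f₂ →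
        conv (r • f₁) f₂ = r • conv f₁ f₂ ∧ conv f₁ (r • f₂) = r • conv f₁ f₂) ∧
      (∀ f₁ f₂ f₃, IsHeckeFunction K f₁ → IsHeckeFunction K f₂ → IsHeckeFunction K f₃ →
        conv (f₁ + f₂) f₃ = conv f₁ f₃ + conv f₂ f₃ ∧
        conv f₁ (f₂ + f₃) = conv f₁ f₂ + conv f₁ f₃) ∧
      (IsHeckeFunction K ((K : Set G).indicator (1 : G → R)) ∧
        ∀ f, IsHeckeFunction K f →
          conv ((K : Set G).indicator (1 : G → R)) f = f ∧
          conv f ((K : Set G).indicator (1 : G → R)) = f) := by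
  have hf : HeckeAux.Hfin K := hfin
  refine ⟨HeckeAux.conv K, ?_, ?_, ?_, ?_, ?_, ?_⟩
  · intro f₁ f₂ h₁ h₂ g F hF
    have hFeq : F = fun x : G ⧸ K => f₁ x.out * f₂ (x.out⁻¹ * g) := by
      funext x
      conv_lhs => rw [← QuotientGroup.out_eq' x]
      rw [hF]
    refine ⟨?_, ?_⟩
    · rw [hFeq]
      exact HeckeAux.supp_summand hf h₁ f₂ g
    · rw [hFeq]
      rfl
  · intro f₁ f₂ h₁ h₂
    exact ⟨fun g k₁ hk₁ k₂ hk₂ => HeckeAux.conv_inv h₁ h₂ g hk₁ hk₂,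
      HeckeAux.conv_finsupp hf h₁ h₂⟩
  · intro f₁ f₂ f₃ h₁ h₂ h₃
    exact HeckeAux.conv_assoc hf h₁ h₂ h₃
  · intro r f₁ f₂ h₁ h₂
    exact ⟨HeckeAux.conv_smul_left hf r h₁ f₂, HeckeAux.conv_smul_right hf r h₁ f₂⟩
  · intro f₁ f₂ f₃ h₁ h₂ h₃
    exact ⟨HeckeAux.conv_add_left hf h₁ h₂ f₃, HeckeAux.conv_add_right hf h₁ f₂ f₃⟩
  · exact ⟨HeckeAux.indicator_hecke,
      fun f hfk => ⟨HeckeAux.conv_one_left hfk, HeckeAux.conv_one_right hfk⟩⟩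
end
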